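/- Let the sequences {(x_k, y_k, z_k)}, {(x*_k, Δy*_k, z*_k)}, {ρ_k}, {σ_k}, {η_k}, {ω_k} be generated by the stabilized LCL algorithm with tolerances ω_* = 0 and η_* = 0. Suppose the iterates {x*_k} (together with {x_k}) lie in a compact set, and that the sequence {x*_k} has a single limit point x*, at which Ĵ(x*) has full row rank. Then, setting y* = ỹ(x*) and z* = g(x*) − J(x*)ᵀy*, the sequence (x_k, y_k, z_k) converges to (x*, y*, z*), and (x*, y*, z*) is a first-order KKT point for (GNP). -/

import Mathlib

open scoped RealInnerProductSpace
open Filter Topology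

noncomputable section

attribute [local instance] Classical.propDecidable

/-- Euclidean space ℝ^n. -/
abbrev Evec (n : ℕ) := EuclideanSpace ℝ (Fin n)

/-- Componentwise minimum of two vectors. -/
def vmin {n : ℕ} (x z : Evec n) : Evec n := WithLp.toLp 2 (fun i => min (x i) (z i))

/-- The ∞-norm of a vector. -/
def normInf {n : ℕ} (x : Evec n) : ℝ := ⨆ i, |x i|

/-- Transpose (adjoint) of a linear map between Euclidean spaces. -/
def Jt {n m : ℕ} (A : Evec n →L[ℝ] Evec m) : Evec m →L[ℝ] Evec n :=
  ContinuousLinearMap.adjoint A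

/-- Restriction of a vector `v` to the set of indices `i` with `xs i > 0`
(the inactive bounds at `xs`). -/
def hatVec {n : ℕ} (xs : Evec n) (v : Evec n) : EuclideanSpace ℝ {i : Fin n // 0 < xs i} :=
  WithLp.toLp 2 (fun (i : {i : Fin n // 0 < xs i}) => v i.1)

/-- "Ĵ has full row rank": the restriction of the transpose of `A` to the
inactive indices of `xs` is injective. -/
def FullRank {n m : ℕ} (A : Evec n →L[ℝ] Evec m) (xs : Evec n) : Prop :=
  Function.Injective (fun y : Evec m => hatVec xs (Jt A y))

/-- First-order KKT point for (GNP). -/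
def isKKT {n m : ℕ} (c : Evec n → Evec m) (g : Evec n → Evec n)
    (J : Evec n → (Evec n →L[ℝ] Evec m)) (x : Evec n) (y : Evec m) (z : Evec n) : Prop :=
  c x = 0 ∧ g x - Jt (J x) y = z ∧ vmin x z = 0

/-- The stabilized LCL algorithm: problem data, parameters, and the sequences
of iterates it generates, together with the rules that govern them. -/
structure LCL (n m : ℕ) where
  /-- objective function -/
  f : Evec n → ℝ
  /-- nonlinear constraint functions -/
  c : Evec n → Evec m
  /-- gradient of `f` -/
  g : Evec n → Evec n
  /-- Jacobian of `c` -/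
  J : Evec n → (Evec n →L[ℝ] Evec m)
  /-- open set containing the nonnegative orthant on which `f, c` are C² -/
  U : Set (Evec n)
  hUopen : IsOpen U
  hUorth : {x : Evec n | ∀ i, 0 ≤ x i} ⊆ U
  hf : ContDiffOn ℝ 2 f U
  hc : ContDiffOn ℝ 2 c U
  hg : ∀ x ∈ U, HasGradientAt f (g x) x
  hJ : ∀ x ∈ U, HasFDerivAt c (J x) x
  -- fixed parameters
  tauρ : ℝ
  tauσ : ℝ
  alf : ℝ
  bet : ℝ
  σlo : ℝ
  σhi : ℝ
  ωstar : ℝ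
  ηstar : ℝ
  htauρ : 1 < tauρ
  htauσ : 1 < tauσ
  half0 : 0 < alf
  half1 : alf < 1
  hbet : 0 < bet
  hσlo : 0 < σlo
  hσlohi : σlo ≤ σhi
  hωstar : 0 ≤ ωstar
  hηstar : 0 ≤ ηstar
  -- the sequences of iterates
  x : ℕ → Evec n
  y : ℕ → Evec m
  z : ℕ → Evec n
  /-- subproblem solutions x*_k -/
  xs : ℕ → Evec n
  /-- subproblem multipliers Δy*_k -/
  dys : ℕ → Evec m
  /-- subproblem reduced costs z*_k -/
  zs : ℕ → Evec n
  ρ : ℕ → ℝ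
  σ : ℕ → ℝ
  η : ℕ → ℝ
  ω : ℕ → ℝ
  hρ0 : 1 < ρ 0
  hσ0 : 0 < σ 0
  hη0 : 0 < η 0
  -- choice of subproblem tolerances: ω_k ≥ ω_* and ω_k → ω_*
  hω_lb : ∀ k, ωstar ≤ ω k
  hω_to : Filter.Tendsto ω Filter.atTop (nhds ωstar)
  -- the inexact elastic subproblem conditions (59)
  sub_nonneg : ∀ k, ∀ i, 0 ≤ xs k i
  sub_lin : ∀ k, ∃ v w : Evec m, (∀ i, 0 ≤ v i) ∧ (∀ i, 0 ≤ w i) ∧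
    c (x k) + J (x k) (xs k - x k) + v - w = 0
  sub_grad : ∀ k,
    g (xs k) - Jt (J (xs k)) (y k - ρ k • c (xs k)) - Jt (J (x k)) (dys k) = zs k
  sub_opt : ∀ k, normInf (vmin (xs k) (zs k)) ≤ ω k
  sub_dy : ∀ k, normInf (dys k) ≤ σ k + ω k
  -- successful iteration updates
  upd_succ : ∀ k, ‖c (xs k)‖ ≤ max ηstar (η k) →
    x (k+1) = xs k ∧
    y (k+1) = y k + dys k - ρ k • c (xs k) ∧
    z (k+1) = zs k ∧
    ρ (k+1) = ρ k ∧
    σ (k+1) = max σlo (min (normInf (dys k)) σhi) ∧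
    η (k+1) = η k / ρ (k+1) ^ bet
  -- unsuccessful iteration updates
  upd_fail : ∀ k, ¬ ‖c (xs k)‖ ≤ max ηstar (η k) →
    x (k+1) = x k ∧
    y (k+1) = y k ∧
    z (k+1) = z k ∧
    ρ (k+1) = tauρ * ρ k ∧
    σ (k+1) = σ k / tauσ ∧
    η (k+1) = η 0 / ρ (k+1) ^ alf

/-- The updated multiplier estimate ŷ_k = y*_k − ρ_k c(x*_k). -/
def LCL.yhat {n m : ℕ} (A : LCL n m) (k : ℕ) : Evec m :=
  A.y k + A.dys k - A.ρ k • A.c (A.xs k)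


section Helpers

lemma abs_le_normInf {n : ℕ} (v : Evec n) (i : Fin n) : |v i| ≤ normInf v :=
  le_ciSup (Set.Finite.bddAbove (Set.finite_range fun j => |v j|)) i

lemma enorm_le_of_comp {ι : Type*} [Fintype ι] (v : EuclideanSpace ℝ ι) (C : ℝ)
    (h : ∀ i, |v i| ≤ C) : ‖v‖ ≤ Real.sqrt (Fintype.card ι) * C := by
  rcases isEmpty_or_nonempty ι with h1 | h1
  · have : ‖v‖ = 0 := by rw [EuclideanSpace.norm_eq]; simp
    simp [this, Fintype.card_eq_zero]
  have hC : 0 ≤ C := le_trans (abs_nonneg _) (h (Classical.arbitrary ι))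
  rw [EuclideanSpace.norm_eq]
  rw [← Real.sqrt_sq hC, ← Real.sqrt_mul (by positivity)]
  apply Real.sqrt_le_sqrt
  calc ∑ i, ‖v i‖ ^ 2 ≤ ∑ _i : ι, C ^ 2 := by
        apply Finset.sum_le_sum; intro i _
        have := h i
        have := abs_nonneg (v i)
        rw [Real.norm_eq_abs]; nlinarith
    _ = (Fintype.card ι) * C ^ 2 := by simp [Finset.sum_const, nsmul_eq_mul]

lemma eabs_le_norm {ι : Type*} [Fintype ι] (v : EuclideanSpace ℝ ι) (i : ι) :
    |v i| ≤ ‖v‖ := by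
  rw [EuclideanSpace.norm_eq, ← Real.sqrt_sq (abs_nonneg (v i))]
  apply Real.sqrt_le_sqrt
  rw [sq_abs]
  calc v i ^ 2 = ‖v i‖ ^ 2 := by rw [Real.norm_eq_abs, sq_abs]
    _ ≤ ∑ j, ‖v j‖ ^ 2 :=
        Finset.single_le_sum (f := fun j => ‖v j‖ ^ 2) (fun j _ => by positivity)
          (Finset.mem_univ i)

/-- The "frozen sequence" lemma: if `a` is updated to `b k` on steps satisfying `S`
and frozen otherwise, `S` holds cofinally, and `b` converges along `S`, then `a`
converges to the same limit. -/
lemma frozen_tendsto {X : Type*} [PseudoMetricSpace X] (a b : ℕ → X) (S : ℕ → Prop)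
    (h1 : ∀ k, S k → a (k+1) = b k) (h2 : ∀ k, ¬ S k → a (k+1) = a k)
    (hS : ∀ N, ∃ k, N ≤ k ∧ S k) (L : X)
    (hb : ∀ ε > 0, ∃ N, ∀ k, N ≤ k → S k → dist (b k) L < ε) :
    Filter.Tendsto a atTop (𝓝 L) := by
  rw [Metric.tendsto_atTop]
  intro ε hε
  obtain ⟨N, hN⟩ := hb ε hε
  obtain ⟨k0, hk0N, hk0S⟩ := hS N
  refine ⟨k0 + 1, fun k hk => ?_⟩
  have claim : ∀ k, k0 + 1 ≤ k → ∃ j, N ≤ j ∧ S j ∧ a k = b j := by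
    intro k hk
    induction k, hk using Nat.le_induction with
    | base => exact ⟨k0, hk0N, hk0S, h1 k0 hk0S⟩
    | succ k hk ih =>
      by_cases hSk : S k
      · exact ⟨k, le_trans hk0N (le_trans (Nat.le_succ k0) hk), hSk, h1 k hSk⟩
      · obtain ⟨j, hj1, hj2, hj3⟩ := ih
        exact ⟨j, hj1, hj2, (h2 k hSk).trans hj3⟩
  obtain ⟨j, hj1, hj2, hj3⟩ := claim k hk
  rw [hj3]
  exact hN j hj1 hj2

/-- A continuous-linear-map version of `hatVec`. -/
def hatCLM {n : ℕ} (xstar : Evec n) :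
    Evec n →L[ℝ] EuclideanSpace ℝ {i : Fin n // 0 < xstar i} :=
  LinearMap.toContinuousLinearMap
    { toFun := fun v => hatVec xstar v
      map_add' := fun _ _ => by ext i; simp [hatVec]
      map_smul' := fun _ _ => by ext i; simp [hatVec] }

@[simp] lemma hatCLM_apply {n : ℕ} (xstar : Evec n) (v : Evec n) :
    hatCLM xstar v = hatVec xstar v := rfl

lemma tendsto_clm_apply {E F : Type*} [NormedAddCommGroup E] [NormedSpace ℝ E]
    [NormedAddCommGroup F] [NormedSpace ℝ F] {T : ℕ → E →L[ℝ] F} {v : ℕ → E}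
    {T0 : E →L[ℝ] F} {v0 : E} (hT : Filter.Tendsto T atTop (𝓝 T0))
    (hv : Filter.Tendsto v atTop (𝓝 v0)) :
    Filter.Tendsto (fun k => T k (v k)) atTop (𝓝 (T0 v0)) :=
  (isBoundedBilinearMap_apply.continuous.tendsto (T0, v0)).comp (hT.prodMk_nhds hv)

end Helpers

set_option maxHeartbeats 4000000 in
/-- Corollary 1: global convergence. -/
theorem stmt9 {n m : ℕ} (A : LCL n m)
    (hws : A.ωstar = 0) (hes : A.ηstar = 0)
    -- compactness of the iterates
    (B : Set (Evec n)) (hB : IsCompact B)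
    (hxsB : ∀ k, A.xs k ∈ B) (hxB : ∀ k, A.x k ∈ B)
    -- x* is the single limit point of {x*_k}, and Ĵ(x*) has full row rank
    (xstar : Evec n)
    (hclus : MapClusterPt xstar atTop A.xs)
    (huniq : ∀ xl : Evec n, MapClusterPt xl atTop A.xs → xl = xstar)
    (hFR : FullRank (A.J xstar) xstar)
    -- y* = ỹ(x*) : the unique minimizer of y ↦ ‖ĝ(x*) − Ĵ(x*)ᵀy‖²
    (ystar : Evec m)
    (hystar : ∀ yy : Evec m, yy ≠ ystar →
      ‖hatVec xstar (A.g xstar) - hatVec xstar (Jt (A.J xstar) ystar)‖ <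
        ‖hatVec xstar (A.g xstar) - hatVec xstar (Jt (A.J xstar) yy)‖) :
    Tendsto (fun k => (A.x k, A.y k, A.z k)) atTop
      (𝓝 (xstar, ystar, A.g xstar - Jt (A.J xstar) ystar)) ∧
    isKKT A.c A.g A.J xstar ystar (A.g xstar - Jt (A.J xstar) ystar) := by
  -- ### basic facts about the parameter sequences
  have hρ1 : ∀ k, 1 < A.ρ k := by
    intro k; induction k with
    | zero => exact A.hρ0
    | succ k ih =>
      by_cases hs : ‖A.c (A.xs k)‖ ≤ max A.ηstar (A.η k)
      · rw [(A.upd_succ k hs).2.2.2.1]; exact ih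
      · rw [(A.upd_fail k hs).2.2.2.1]; nlinarith [A.htauρ]
  have hρpos : ∀ k, (0:ℝ) < A.ρ k := fun k => lt_trans one_pos (hρ1 k)
  have hρmono : Monotone A.ρ := by
    apply monotone_nat_of_le_succ
    intro k
    by_cases hs : ‖A.c (A.xs k)‖ ≤ max A.ηstar (A.η k)
    · rw [(A.upd_succ k hs).2.2.2.1]
    · rw [(A.upd_fail k hs).2.2.2.1]; nlinarith [A.htauρ, hρpos k]
  have hηpos : ∀ k, 0 < A.η k := by
    intro k; induction k with
    | zero => exact A.hη0
    | succ k ih =>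
      by_cases hs : ‖A.c (A.xs k)‖ ≤ max A.ηstar (A.η k)
      · rw [(A.upd_succ k hs).2.2.2.2.2]
        exact div_pos ih (Real.rpow_pos_of_pos (hρpos _) _)
      · rw [(A.upd_fail k hs).2.2.2.2.2]
        exact div_pos A.hη0 (Real.rpow_pos_of_pos (hρpos _) _)
  have hSc' : ∀ k, (‖A.c (A.xs k)‖ ≤ max A.ηstar (A.η k)) ↔ ‖A.c (A.xs k)‖ ≤ A.η k := by
    intro k; rw [hes, max_eq_right (le_of_lt (hηpos k))]
  have hω0 : ∀ k, 0 ≤ A.ω k := fun k => hws ▸ A.hω_lb k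
  have hωto : Tendsto A.ω atTop (𝓝 0) := hws ▸ A.hω_to
  have htσpos : (0:ℝ) < A.tauσ := lt_trans one_pos A.htauσ
  have hσpos : ∀ k, 0 < A.σ k := by
    intro k; induction k with
    | zero => exact A.hσ0
    | succ k ih =>
      by_cases hs : ‖A.c (A.xs k)‖ ≤ max A.ηstar (A.η k)
      · rw [(A.upd_succ k hs).2.2.2.2.1]
        exact lt_of_lt_of_le A.hσlo (le_max_left _ _)
      · rw [(A.upd_fail k hs).2.2.2.2.1]
        exact div_pos ih htσpos
  have hσub : ∀ k, A.σ k ≤ max (A.σ 0) A.σhi := by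
    intro k; induction k with
    | zero => exact le_max_left _ _
    | succ k ih =>
      by_cases hs : ‖A.c (A.xs k)‖ ≤ max A.ηstar (A.η k)
      · rw [(A.upd_succ k hs).2.2.2.2.1]
        apply max_le (le_trans A.hσlohi (le_max_right _ _))
        exact le_trans (min_le_right _ _) (le_max_right _ _)
      · rw [(A.upd_fail k hs).2.2.2.2.1]
        exact le_trans (div_le_self (hσpos k).le A.htauσ.le) ih
  obtain ⟨W, hW⟩ : ∃ W, ∀ k, A.ω k ≤ W := by
    obtain ⟨W, hW⟩ := hωto.bddAbove_range
    exact ⟨W, fun k => hW (Set.mem_range_self k)⟩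
  set D : ℝ := Real.sqrt m * (max (A.σ 0) A.σhi + W) with hD
  have hdysD : ∀ k, ‖A.dys k‖ ≤ D := by
    intro k
    have h1 : ‖A.dys k‖ ≤ Real.sqrt m * (A.σ k + A.ω k) := by
      have := enorm_le_of_comp (A.dys k) (A.σ k + A.ω k)
        (fun i => le_trans (abs_le_normInf (A.dys k) i) (A.sub_dy k))
      simpa using this
    refine le_trans h1 (mul_le_mul_of_nonneg_left ?_ (Real.sqrt_nonneg _))
    exact add_le_add (hσub k) (hW k)
  have hD0 : 0 ≤ D := le_trans (norm_nonneg _) (hdysD 0)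
  -- ### membership in U and continuity facts
  have hUx : ∀ v : Evec n, (∀ i, 0 ≤ v i) → v ∈ A.U := fun v hv => A.hUorth hv
  have hxsU : ∀ k, A.xs k ∈ A.U := fun k => hUx _ (A.sub_nonneg k)
  have hxs : Tendsto A.xs atTop (𝓝 xstar) :=
    hB.tendsto_nhds_of_unique_mapClusterPt (Eventually.of_forall hxsB)
      (fun x _ hx => huniq x hx)
  have hxscomp : ∀ i : Fin n, Tendsto (fun k => A.xs k i) atTop (𝓝 (xstar i)) := by
    intro i
    exact ((EuclideanSpace.proj (𝕜 := ℝ) i).continuous.tendsto xstar).comp hxs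
  have hxsnn : ∀ i, 0 ≤ xstar i := by
    intro i
    exact ge_of_tendsto' (hxscomp i) (fun k => A.sub_nonneg k i)
  have hxstarU : xstar ∈ A.U := hUx _ hxsnn
  have hJcont : ContinuousOn A.J A.U := by
    have h1 : ContinuousOn (fderiv ℝ A.c) A.U :=
      A.hc.continuousOn_fderiv_of_isOpen A.hUopen (by norm_num)
    exact h1.congr (fun x hx => ((A.hJ x hx).fderiv).symm)
  have hgcont : ContinuousOn A.g A.U := by
    have h1 : ContinuousOn (fderiv ℝ A.f) A.U :=
      A.hf.continuousOn_fderiv_of_isOpen A.hUopen (by norm_num)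
    have h2 : ContinuousOn
        (fun x => (InnerProductSpace.toDual ℝ (Evec n)).symm (fderiv ℝ A.f x)) A.U :=
      (InnerProductSpace.toDual ℝ (Evec n)).symm.continuous.comp_continuousOn h1
    apply h2.congr
    intro x hx
    show A.g x = (InnerProductSpace.toDual ℝ (Evec n)).symm (fderiv ℝ A.f x)
    rw [(A.hg x hx).hasFDerivAt.fderiv]
    simp
  have hccont : ContinuousOn A.c A.U := A.hc.continuousOn
  -- ### the reduced-Jacobian-transpose operators
  set H : Evec n →L[ℝ] EuclideanSpace ℝ {i : Fin n // 0 < xstar i} := hatCLM xstar with hHdef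
  set Th : Evec n → (Evec m →L[ℝ] EuclideanSpace ℝ {i : Fin n // 0 < xstar i}) :=
    fun x => H.comp (Jt (A.J x)) with hThdef
  have hThap : ∀ x v, Th x v = hatVec xstar (Jt (A.J x) v) := fun x v => rfl
  have hThinj : Function.Injective (Th xstar) := by
    intro a b hab
    exact hFR (by simpa [hThap] using hab)
  obtain ⟨K, hKpos, hK⟩ :=
    (LinearMap.injective_iff_antilipschitz ((Th xstar) : Evec m →ₗ[ℝ] _)).mp
      (by exact hThinj)
  have hKrpos : (0:ℝ) < K := hKpos
  have hKbd : ∀ v : Evec m, ‖v‖ ≤ K * ‖Th xstar v‖ := by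
    intro v
    have := hK.le_mul_dist v 0
    simpa [dist_eq_norm] using this
  have hThcont : ContinuousOn Th A.U := by
    have h1 : Continuous (fun Bm : Evec n →L[ℝ] Evec m => Jt Bm) :=
      (ContinuousLinearMap.adjoint (E := Evec n) (F := Evec m)).continuous
    have h2 : Continuous (fun Bm : Evec n →L[ℝ] Evec m => H.comp (Jt Bm)) :=
      ((ContinuousLinearMap.compL ℝ (Evec m) (Evec n) _ H).continuous).comp h1
    exact h2.comp_continuousOn hJcont
  have hThxs : Tendsto (fun k => Th (A.xs k)) atTop (𝓝 (Th xstar)) :=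
    ((hThcont.continuousAt (A.hUopen.mem_nhds hxstarU)).tendsto).comp hxs
  -- a uniform lower bound for `Th (xs k)` for large `k`
  set γ : ℝ := (2 * K)⁻¹ with hγdef
  have hγpos : 0 < γ := by positivity
  have hγbd : ∀ᶠ k in atTop, ∀ v : Evec m, γ * ‖v‖ ≤ ‖Th (A.xs k) v‖ := by
    have hev : ∀ᶠ k in atTop, dist (Th (A.xs k)) (Th xstar) < γ :=
      hThxs.eventually (Metric.ball_mem_nhds _ hγpos)
    filter_upwards [hev] with k hk v
    have h1 : ‖v‖ ≤ K * ‖Th xstar v‖ := hKbd v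
    have h2 : ‖Th xstar v‖ ≤ ‖Th (A.xs k) v‖ + ‖(Th xstar - Th (A.xs k)) v‖ := by
      have : Th xstar v = Th (A.xs k) v + (Th xstar - Th (A.xs k)) v := by
        simp
      rw [this]; exact norm_add_le _ _
    have h3 : ‖(Th xstar - Th (A.xs k)) v‖ ≤ γ * ‖v‖ := by
      refine le_trans ((Th xstar - Th (A.xs k)).le_opNorm v) ?_
      apply mul_le_mul_of_nonneg_right _ (norm_nonneg v)
      rw [dist_eq_norm, norm_sub_rev] at hk
      exact hk.le
    have hKγ : (K:ℝ) * γ = 1/2 := by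
      rw [hγdef]; field_simp
    have h2' : (K:ℝ) * ‖Th xstar v‖ ≤ K * (‖Th (A.xs k) v‖ + ‖(Th xstar - Th (A.xs k)) v‖) :=
      mul_le_mul_of_nonneg_left h2 hKrpos.le
    have h3' : (K:ℝ) * ‖(Th xstar - Th (A.xs k)) v‖ ≤ K * (γ * ‖v‖) :=
      mul_le_mul_of_nonneg_left h3 hKrpos.le
    have h3'' : (K:ℝ) * (γ * ‖v‖) = (1/2) * ‖v‖ := by rw [← mul_assoc, hKγ]
    have e1 : (K:ℝ) * (‖Th (A.xs k) v‖ + ‖(Th xstar - Th (A.xs k)) v‖) =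
        K * ‖Th (A.xs k) v‖ + K * ‖(Th xstar - Th (A.xs k)) v‖ := mul_add _ _ _
    rw [hγdef, inv_mul_le_iff₀ (by positivity)]
    linarith
  -- ### hat components of zs tend to 0
  have hzlb : ∀ k i, -(A.ω k) ≤ A.zs k i := by
    intro k i
    have h1 : |min (A.xs k i) (A.zs k i)| ≤ A.ω k :=
      le_trans (abs_le_normInf (vmin (A.xs k) (A.zs k)) i) (A.sub_opt k)
    have h2 := neg_le_of_abs_le h1
    exact le_trans h2 (min_le_right _ _)
  have hzhatbd : ∀ᶠ k in atTop, ∀ i : {i : Fin n // 0 < xstar i}, |A.zs k i.1| ≤ A.ω k := by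
    rw [eventually_all]
    intro i
    have h1 : Tendsto (fun k => A.xs k i.1 - A.ω k) atTop (𝓝 (xstar i.1 - 0)) :=
      (hxscomp i.1).sub hωto
    rw [sub_zero] at h1
    have h2 : ∀ᶠ k in atTop, 0 < A.xs k i.1 - A.ω k :=
      h1.eventually (eventually_gt_nhds i.2)
    filter_upwards [h2] with k hk
    have hminle : |min (A.xs k i.1) (A.zs k i.1)| ≤ A.ω k :=
      le_trans (abs_le_normInf (vmin (A.xs k) (A.zs k)) i.1) (A.sub_opt k)
    rcases le_or_gt (A.zs k i.1) (A.xs k i.1) with h | h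
    · rwa [min_eq_right h] at hminle
    · exfalso
      rw [min_eq_left h.le] at hminle
      have := le_abs_self (A.xs k i.1)
      linarith
  have hHz : Tendsto (fun k => H (A.zs k)) atTop (𝓝 0) := by
    apply squeeze_zero_norm' (a := fun k =>
      Real.sqrt (Fintype.card {i : Fin n // 0 < xstar i}) * A.ω k)
    · filter_upwards [hzhatbd] with k hk
      exact enorm_le_of_comp _ _ (fun i => hk i)
    · have := hωto.const_mul (Real.sqrt (Fintype.card {i : Fin n // 0 < xstar i}))
      simpa using this
  -- ### the key identity
  have hId : ∀ k, Th (A.xs k) (A.yhat k) =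
      H (A.g (A.xs k)) - H (A.zs k) - Th (A.x k) (A.dys k) + Th (A.xs k) (A.dys k) := by
    intro k
    have h0 := A.sub_grad k
    have h2 : Jt (A.J (A.xs k)) (A.y k - A.ρ k • A.c (A.xs k)) =
        A.g (A.xs k) - A.zs k - Jt (A.J (A.x k)) (A.dys k) := by
      rw [← h0]; abel
    have h1 : Jt (A.J (A.xs k)) (A.yhat k) =
        A.g (A.xs k) - A.zs k - Jt (A.J (A.x k)) (A.dys k) + Jt (A.J (A.xs k)) (A.dys k) := by
      have hy : A.yhat k = (A.y k - A.ρ k • A.c (A.xs k)) + A.dys k := by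
        unfold LCL.yhat; abel
      rw [hy, map_add, h2]
    simp only [hThdef, ContinuousLinearMap.comp_apply]
    rw [h1, map_add, map_sub, map_sub]
  -- ### success predicate
  set Sc : ℕ → Prop := fun k => ‖A.c (A.xs k)‖ ≤ max A.ηstar (A.η k) with hScdef
  -- if there are infinitely many failures, the penalty parameter blows up
  have hρtop_of : (setOf fun k => ¬ Sc k).Infinite → Tendsto A.ρ atTop atTop := by
    intro hF
    apply tendsto_atTop_atTop_of_monotone hρmono
    intro b
    have claim : ∀ N : ℕ, ∃ k, A.tauρ ^ N ≤ A.ρ k := by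
      intro N; induction N with
      | zero => exact ⟨0, by simpa using (hρ1 0).le⟩
      | succ N ih =>
        obtain ⟨k, hk⟩ := ih
        obtain ⟨j, hjmem, hjk⟩ := hF.exists_gt k
        refine ⟨j + 1, ?_⟩
        rw [(A.upd_fail j hjmem).2.2.2.1]
        have h1 : A.ρ k ≤ A.ρ j := hρmono hjk.le
        have h2 : (0:ℝ) < A.tauρ := lt_trans one_pos A.htauρ
        calc A.tauρ ^ (N + 1) = A.tauρ ^ N * A.tauρ := pow_succ _ _
          _ ≤ A.ρ j * A.tauρ := mul_le_mul_of_nonneg_right (le_trans hk h1) h2.le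
          _ = A.tauρ * A.ρ j := mul_comm _ _
    obtain ⟨N, hN⟩ := pow_unbounded_of_one_lt b A.htauρ
    obtain ⟨k, hk⟩ := claim N
    exact ⟨k, le_trans hN.le hk⟩
  -- ### there are infinitely many successful iterations
  have hSinf : (setOf Sc).Infinite := by
    by_contra hfin
    rw [Set.not_infinite] at hfin
    obtain ⟨K0, hK0⟩ : ∃ K0, ∀ k, K0 ≤ k → ¬ Sc k := by
      rcases Set.eq_empty_or_nonempty (setOf Sc) with he | hne
      · exact ⟨0, fun k _ hk => by rw [Set.eq_empty_iff_forall_notMem] at he; exact he k hk⟩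
      obtain ⟨b, hb⟩ := hfin.bddAbove
      exact ⟨b + 1, fun k hk hSk => by have := hb hSk; omega⟩
    have hF : (setOf fun k => ¬ Sc k).Infinite := by
      apply Set.infinite_of_forall_exists_gt
      intro a
      exact ⟨max K0 a + 1, hK0 _ (by omega), by omega⟩
    have hρtop := hρtop_of hF
    -- x and y are frozen from K0 on
    have hxfr : ∀ k, K0 ≤ k → A.x k = A.x K0 := by
      intro k hk
      induction k, hk using Nat.le_induction with
      | base => rfl
      | succ k hk ih => rw [(A.upd_fail k (hK0 k hk)).1]; exact ih
    have hyfr : ∀ k, K0 ≤ k → A.y k = A.y K0 := by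
      intro k hk
      induction k, hk using Nat.le_induction with
      | base => rfl
      | succ k hk ih => rw [(A.upd_fail k (hK0 k hk)).2.1]; exact ih
    -- σ and dys tend to 0
    have hσgeo : ∀ j, A.σ (K0 + j) = A.σ K0 / A.tauσ ^ j := by
      intro j; induction j with
      | zero => simp
      | succ j ih =>
        have : K0 + (j + 1) = (K0 + j) + 1 := by omega
        rw [this, (A.upd_fail (K0 + j) (hK0 _ (by omega))).2.2.2.2.1, ih,
          div_div, pow_succ]
    have hσto : Tendsto A.σ atTop (𝓝 0) := by
      rw [← tendsto_add_atTop_iff_nat K0]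
      have h1 : Tendsto (fun j : ℕ => A.σ K0 / A.tauσ ^ j) atTop (𝓝 0) :=
        tendsto_const_nhds.div_atTop (tendsto_pow_atTop_atTop_of_one_lt A.htauσ)
      apply h1.congr
      intro j
      rw [add_comm j K0, hσgeo j]
    have hdys0 : Tendsto A.dys atTop (𝓝 0) := by
      apply squeeze_zero_norm' (a := fun k => Real.sqrt m * (A.σ k + A.ω k))
      · apply Eventually.of_forall
        intro k
        have := enorm_le_of_comp (A.dys k) (A.σ k + A.ω k)
          (fun i => le_trans (abs_le_normInf (A.dys k) i) (A.sub_dy k))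
        simpa using this
      · have h1 : Tendsto (fun k => A.σ k + A.ω k) atTop (𝓝 (0 + 0)) := hσto.add hωto
        rw [add_zero] at h1
        have := h1.const_mul (Real.sqrt m)
        simpa using this
    -- R k := Th (xs k) (yhat k) converges, so yhat is eventually bounded
    have hgH : Tendsto (fun k => H (A.g (A.xs k))) atTop (𝓝 (H (A.g xstar))) :=
      (((H.continuous.comp_continuousOn hgcont).continuousAt
        (A.hUopen.mem_nhds hxstarU)).tendsto).comp hxs
    have hTd1 : Tendsto (fun k => Th (A.x k) (A.dys k)) atTop (𝓝 0) := by
      have h1 : Tendsto (fun k => Th (A.x K0) (A.dys k)) atTop (𝓝 (Th (A.x K0) 0)) :=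
        ((Th (A.x K0)).continuous.tendsto 0).comp hdys0
      rw [map_zero] at h1
      apply h1.congr'
      filter_upwards [eventually_ge_atTop K0] with k hk
      rw [hxfr k hk]
    have hTd2 : Tendsto (fun k => Th (A.xs k) (A.dys k)) atTop (𝓝 0) := by
      have := tendsto_clm_apply hThxs hdys0
      rwa [map_zero] at this
    have hRconv : Tendsto (fun k => Th (A.xs k) (A.yhat k)) atTop
        (𝓝 (H (A.g xstar) - 0 - 0 + 0)) := by
      apply Tendsto.congr (fun k => (hId k).symm)
      exact ((hgH.sub hHz).sub hTd1).add hTd2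
    obtain ⟨C, hC⟩ : ∃ C, ∀ k, ‖Th (A.xs k) (A.yhat k)‖ ≤ C := by
      obtain ⟨C, hC⟩ := hRconv.norm.bddAbove_range
      exact ⟨C, fun k => hC (Set.mem_range_self k)⟩
    -- hence ρ k * ‖c (xs k)‖ is eventually bounded
    have hρc : ∀ᶠ k in atTop, A.ρ k * ‖A.c (A.xs k)‖ ≤ C / γ + ‖A.y K0‖ + D := by
      filter_upwards [hγbd, eventually_ge_atTop K0] with k h1 h2
      have h3 : γ * ‖A.yhat k‖ ≤ C := le_trans (h1 _) (hC k)
      have h4 : ‖A.yhat k‖ ≤ C / γ := by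
        rw [le_div_iff₀ hγpos]; linarith [mul_comm γ ‖A.yhat k‖]
      have h5 : A.ρ k • A.c (A.xs k) = A.y k + A.dys k - A.yhat k := by
        unfold LCL.yhat; abel
      have h6 : A.ρ k * ‖A.c (A.xs k)‖ = ‖A.ρ k • A.c (A.xs k)‖ := by
        rw [norm_smul, Real.norm_eq_abs, abs_of_pos (hρpos k)]
      rw [h6, h5, hyfr k h2]
      calc ‖A.y K0 + A.dys k - A.yhat k‖ ≤ ‖A.y K0 + A.dys k‖ + ‖A.yhat k‖ := norm_sub_le _ _
        _ ≤ ‖A.y K0‖ + ‖A.dys k‖ + ‖A.yhat k‖ := by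
            have := norm_add_le (A.y K0) (A.dys k); linarith
        _ ≤ C / γ + ‖A.y K0‖ + D := by linarith [hdysD k]
    -- but failure forces ρ k * ‖c (xs k)‖ ≥ η 0 * ρ k ^ (1 - alf) → ∞
    have hlow : Tendsto (fun k => A.η 0 * A.ρ k ^ (1 - A.alf)) atTop atTop := by
      have h1 : Tendsto (fun x : ℝ => x ^ (1 - A.alf)) atTop atTop :=
        tendsto_rpow_atTop (by linarith [A.half1])
      exact (h1.comp hρtop).const_mul_atTop A.hη0
    have hub : ∀ᶠ k in atTop, A.η 0 * A.ρ k ^ (1 - A.alf) ≤ C / γ + ‖A.y K0‖ + D := by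
      filter_upwards [hρc, eventually_ge_atTop (K0 + 1)] with k hk1 hk2
      obtain ⟨j, rfl⟩ : ∃ j, k = j + 1 := ⟨k - 1, by omega⟩
      have hjf : ¬ Sc j := hK0 j (by omega)
      have hηe : A.η (j+1) = A.η 0 / A.ρ (j+1) ^ A.alf := (A.upd_fail j hjf).2.2.2.2.2
      have hfail : A.η (j+1) < ‖A.c (A.xs (j+1))‖ := by
        have hnot : ¬ ‖A.c (A.xs (j+1))‖ ≤ max A.ηstar (A.η (j+1)) := hK0 (j+1) (by omega)
        exact lt_of_le_of_lt (le_max_right _ _) (not_le.mp hnot)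
      have hre : A.ρ (j+1) ^ (1 - A.alf) = A.ρ (j+1) / A.ρ (j+1) ^ A.alf := by
        rw [Real.rpow_sub (hρpos (j+1)), Real.rpow_one]
      have hcalc : A.η 0 * A.ρ (j+1) ^ (1 - A.alf) = A.ρ (j+1) * A.η (j+1) := by
        rw [hre, hηe]; field_simp
      rw [hcalc]
      calc A.ρ (j+1) * A.η (j+1) ≤ A.ρ (j+1) * ‖A.c (A.xs (j+1))‖ :=
            mul_le_mul_of_nonneg_left hfail.le (hρpos (j+1)).le
        _ ≤ C / γ + ‖A.y K0‖ + D := hk1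
    obtain ⟨k, hk1, hk2⟩ := ((hlow.eventually_gt_atTop (C / γ + ‖A.y K0‖ + D)).and hub).exists
    linarith
  have hSex : ∀ N, ∃ k, N ≤ k ∧ Sc k := by
    intro N
    obtain ⟨k, hk1, hk2⟩ := hSinf.exists_gt N
    exact ⟨k, hk2.le, hk1⟩
  -- ### x converges to xstar
  have hxconv : Tendsto A.x atTop (𝓝 xstar) := by
    apply frozen_tendsto A.x A.xs Sc
      (fun k hk => (A.upd_succ k hk).1) (fun k hk => (A.upd_fail k hk).1) hSex xstar
    intro ε hε
    obtain ⟨N, hN⟩ := Metric.tendsto_atTop.mp hxs ε hε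
    exact ⟨N, fun k hk _ => hN k hk⟩
  -- ### η tends to 0
  have hηto : Tendsto A.η atTop (𝓝 0) := by
    by_cases hF : (setOf fun k => ¬ Sc k).Infinite
    · -- infinitely many failures
      have hρtop := hρtop_of hF
      have hbound : ∀ k, (∃ j, j < k ∧ ¬ Sc j) → A.η k ≤ A.η 0 / A.ρ k ^ A.alf := by
        intro k
        induction k with
        | zero => rintro ⟨j, hj, _⟩; omega
        | succ k ih =>
          rintro ⟨j, hj, hjf⟩
          by_cases hSk : Sc k
          · have hjk : j < k := by
              rcases Nat.lt_succ_iff_lt_or_eq.mp hj with h | h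
              · exact h
              · exfalso; rw [h] at hjf; exact hjf hSk
            have h1 := ih ⟨j, hjk, hjf⟩
            obtain ⟨-, -, -, hρe, -, hηe⟩ := A.upd_succ k hSk
            rw [hηe, hρe]
            have hge1 : 1 ≤ A.ρ k ^ A.bet := Real.one_le_rpow (hρ1 k).le A.hbet.le
            calc A.η k / A.ρ k ^ A.bet ≤ A.η k := div_le_self (hηpos k).le hge1
              _ ≤ A.η 0 / A.ρ k ^ A.alf := h1
          · exact le_of_eq (A.upd_fail k hSk).2.2.2.2.2
      obtain ⟨j0, hj0⟩ := hF.nonempty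
      have hub : ∀ᶠ k in atTop, A.η k ≤ A.η 0 / A.ρ k ^ A.alf := by
        filter_upwards [eventually_ge_atTop (j0 + 1)] with k hk
        exact hbound k ⟨j0, by omega, hj0⟩
      have hto : Tendsto (fun k => A.η 0 / A.ρ k ^ A.alf) atTop (𝓝 0) := by
        apply tendsto_const_nhds.div_atTop
        exact (tendsto_rpow_atTop A.half0).comp hρtop
      exact squeeze_zero' (Eventually.of_forall (fun k => (hηpos k).le)) hub hto
    · -- finitely many failures
      rw [Set.not_infinite] at hF
      obtain ⟨K1, hK1⟩ : ∃ K1, ∀ k, K1 ≤ k → Sc k := by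
        rcases Set.eq_empty_or_nonempty (setOf fun k => ¬ Sc k) with he | hne
        · refine ⟨0, fun k _ => ?_⟩
          by_contra hc
          rw [Set.eq_empty_iff_forall_notMem] at he
          exact he k hc
        obtain ⟨b, hb⟩ := hF.bddAbove
        refine ⟨b + 1, fun k hk => ?_⟩
        by_contra hc
        have := hb (show k ∈ setOf fun k => ¬ Sc k from hc)
        omega
      have hρc : ∀ j, A.ρ (K1 + j) = A.ρ K1 := by
        intro j; induction j with
        | zero => rfl
        | succ j ih =>
          have : K1 + (j + 1) = (K1 + j) + 1 := by omega
          rw [this, (A.upd_succ (K1 + j) (hK1 _ (by omega))).2.2.2.1, ih]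
      set q : ℝ := A.ρ K1 ^ A.bet with hq
      have hq1 : 1 < q := by
        rw [hq]
        rcases Real.one_lt_rpow_iff_of_pos (hρpos K1) (y := A.bet) |>.mpr
          (Or.inl ⟨hρ1 K1, A.hbet⟩) with h
        exact h
      have hηgeo : ∀ j, A.η (K1 + j) = A.η K1 / q ^ j := by
        intro j; induction j with
        | zero => simp
        | succ j ih =>
          have he : K1 + (j + 1) = (K1 + j) + 1 := by omega
          rw [he, (A.upd_succ (K1 + j) (hK1 _ (by omega))).2.2.2.2.2,
            (A.upd_succ (K1 + j) (hK1 _ (by omega))).2.2.2.1, hρc j, ih, div_div,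
            ← pow_succ]
      rw [← tendsto_add_atTop_iff_nat K1]
      have h1 : Tendsto (fun j : ℕ => A.η K1 / q ^ j) atTop (𝓝 0) :=
        tendsto_const_nhds.div_atTop (tendsto_pow_atTop_atTop_of_one_lt hq1)
      apply h1.congr
      intro j
      rw [add_comm j K1, hηgeo j]
  -- ### xstar is feasible
  have hcx : A.c xstar = 0 := by
    have hcxs : Tendsto (fun k => ‖A.c (A.xs k)‖) atTop (𝓝 ‖A.c xstar‖) :=
      (((hccont.continuousAt (A.hUopen.mem_nhds hxstarU)).tendsto).comp hxs).norm
    by_contra hne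
    have hpos : 0 < ‖A.c xstar‖ := norm_pos_iff.mpr hne
    have h1 : ∀ᶠ k in atTop, ‖A.c xstar‖ / 2 < ‖A.c (A.xs k)‖ :=
      hcxs.eventually (eventually_gt_nhds (by linarith))
    have h2 : ∀ᶠ k in atTop, A.η k < ‖A.c xstar‖ / 2 :=
      hηto.eventually (eventually_lt_nhds (by linarith))
    obtain ⟨N, hN⟩ := (h1.and h2).exists_forall_of_atTop
    obtain ⟨k, hk1, hk2⟩ := hSex N
    obtain ⟨ha, hb⟩ := hN k hk1
    have := (hSc' k).mp hk2
    linarith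
  -- ### convergence of the multiplier estimates yhat
  have hThx : Tendsto (fun k => Th (A.x k)) atTop (𝓝 (Th xstar)) :=
    ((hThcont.continuousAt (A.hUopen.mem_nhds hxstarU)).tendsto).comp hxconv
  have hgH : Tendsto (fun k => H (A.g (A.xs k))) atTop (𝓝 (H (A.g xstar))) :=
    (((H.continuous.comp_continuousOn hgcont).continuousAt
      (A.hUopen.mem_nhds hxstarU)).tendsto).comp hxs
  have hdiff0 : Tendsto (fun k => Th (A.xs k) (A.dys k) - Th (A.x k) (A.dys k))
      atTop (𝓝 0) := by
    apply squeeze_zero_norm' (a := fun k => ‖Th (A.xs k) - Th (A.x k)‖ * D)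
    · apply Eventually.of_forall
      intro k
      have h1 : Th (A.xs k) (A.dys k) - Th (A.x k) (A.dys k) =
          (Th (A.xs k) - Th (A.x k)) (A.dys k) := by simp
      rw [h1]
      refine le_trans ((Th (A.xs k) - Th (A.x k)).le_opNorm _) ?_
      exact mul_le_mul_of_nonneg_left (hdysD k) (norm_nonneg _)
    · have h1 : Tendsto (fun k => Th (A.xs k) - Th (A.x k)) atTop
          (𝓝 (Th xstar - Th xstar)) := hThxs.sub hThx
      rw [sub_self] at h1
      have := h1.norm.mul_const D
      simpa using this
  have hR : Tendsto (fun k => Th (A.xs k) (A.yhat k)) atTop (𝓝 (H (A.g xstar))) := by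
    have h1 : Tendsto (fun k => H (A.g (A.xs k)) - H (A.zs k) +
        (Th (A.xs k) (A.dys k) - Th (A.x k) (A.dys k))) atTop
        (𝓝 (H (A.g xstar) - 0 + 0)) := (hgH.sub hHz).add hdiff0
    rw [sub_zero, add_zero] at h1
    apply h1.congr
    intro k
    rw [hId k]; abel
  obtain ⟨C, hC⟩ : ∃ C, ∀ k, ‖Th (A.xs k) (A.yhat k)‖ ≤ C := by
    obtain ⟨C, hC⟩ := hR.norm.bddAbove_range
    exact ⟨C, fun k => hC (Set.mem_range_self k)⟩
  have hyhatbd : ∀ᶠ k in atTop, ‖A.yhat k‖ ≤ C / γ := by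
    filter_upwards [hγbd] with k h1
    have h3 : γ * ‖A.yhat k‖ ≤ C := le_trans (h1 _) (hC k)
    rw [le_div_iff₀ hγpos]
    linarith [mul_comm γ ‖A.yhat k‖]
  have hTy : Tendsto (fun k => Th xstar (A.yhat k)) atTop (𝓝 (H (A.g xstar))) := by
    have h2 : Tendsto (fun k => Th xstar (A.yhat k) - Th (A.xs k) (A.yhat k))
        atTop (𝓝 0) := by
      apply squeeze_zero_norm' (a := fun k => ‖Th xstar - Th (A.xs k)‖ * (C / γ))
      · filter_upwards [hyhatbd] with k hk
        have h1 : Th xstar (A.yhat k) - Th (A.xs k) (A.yhat k) =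
            (Th xstar - Th (A.xs k)) (A.yhat k) := by simp
        rw [h1]
        refine le_trans ((Th xstar - Th (A.xs k)).le_opNorm _) ?_
        exact mul_le_mul_of_nonneg_left hk (norm_nonneg _)
      · have h1 : Tendsto (fun k => Th xstar - Th (A.xs k)) atTop
            (𝓝 (Th xstar - Th xstar)) := tendsto_const_nhds.sub hThxs
        rw [sub_self] at h1
        have := h1.norm.mul_const (C / γ)
        simpa using this
    have h3 := h2.add hR
    rw [zero_add] at h3
    apply h3.congr
    intro k; abel
  have hrange : H (A.g xstar) ∈ Set.range (Th xstar) := by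
    have hcl : IsClosed (Set.range (Th xstar)) := by
      have h1 := Submodule.closed_of_finiteDimensional
        (LinearMap.range ((Th xstar).toLinearMap))
      simpa [LinearMap.coe_range, ContinuousLinearMap.coe_coe] using h1
    exact hcl.mem_of_tendsto hTy (Eventually.of_forall fun k => ⟨A.yhat k, rfl⟩)
  obtain ⟨y0, hy0⟩ := hrange
  have hyhat : Tendsto A.yhat atTop (𝓝 y0) := by
    rw [tendsto_iff_norm_sub_tendsto_zero]
    apply squeeze_zero_norm' (a := fun k => K * ‖Th xstar (A.yhat k) - H (A.g xstar)‖)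
    · apply Eventually.of_forall
      intro k
      have h1 : Th xstar (A.yhat k) - H (A.g xstar) = Th xstar (A.yhat k - y0) := by
        rw [map_sub, hy0]
      rw [norm_norm]
      calc ‖A.yhat k - y0‖ ≤ K * ‖Th xstar (A.yhat k - y0)‖ := hKbd _
        _ = K * ‖Th xstar (A.yhat k) - H (A.g xstar)‖ := by rw [← h1]
    · have h1 : Tendsto (fun k => Th xstar (A.yhat k) - H (A.g xstar)) atTop (𝓝 0) := by
        have := hTy.sub (tendsto_const_nhds (x := H (A.g xstar)))
        rwa [sub_self] at this
      have := h1.norm.const_mul (K:ℝ)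
      simpa using this
  have hy0eq : y0 = ystar := by
    by_contra hne
    have hlt := hystar y0 hne
    have h0 : hatVec xstar (A.g xstar) - hatVec xstar (Jt (A.J xstar) y0) = 0 := by
      have h1 : (hatVec xstar (A.g xstar) : EuclideanSpace ℝ {i : Fin n // 0 < xstar i})
          = H (A.g xstar) := rfl
      have h2 : (hatVec xstar (Jt (A.J xstar) y0) : EuclideanSpace ℝ
          {i : Fin n // 0 < xstar i}) = Th xstar y0 := rfl
      rw [h1, h2, hy0, sub_self]
    rw [h0, norm_zero] at hlt
    exact absurd hlt (not_lt.mpr (norm_nonneg _))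
  rw [hy0eq] at hyhat hy0
  -- ### convergence of zs
  have hJtcont : ContinuousOn (fun x => Jt (A.J x)) A.U :=
    ((ContinuousLinearMap.adjoint (E := Evec n) (F := Evec m)).continuous).comp_continuousOn
      hJcont
  have hJtxs : Tendsto (fun k => Jt (A.J (A.xs k))) atTop (𝓝 (Jt (A.J xstar))) :=
    ((hJtcont.continuousAt (A.hUopen.mem_nhds hxstarU)).tendsto).comp hxs
  have hJtx : Tendsto (fun k => Jt (A.J (A.x k))) atTop (𝓝 (Jt (A.J xstar))) :=
    ((hJtcont.continuousAt (A.hUopen.mem_nhds hxstarU)).tendsto).comp hxconv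
  have hgxs : Tendsto (fun k => A.g (A.xs k)) atTop (𝓝 (A.g xstar)) :=
    ((hgcont.continuousAt (A.hUopen.mem_nhds hxstarU)).tendsto).comp hxs
  have hid2 : ∀ k, A.zs k = A.g (A.xs k) - Jt (A.J (A.xs k)) (A.yhat k) +
      (Jt (A.J (A.xs k)) (A.dys k) - Jt (A.J (A.x k)) (A.dys k)) := by
    intro k
    have h0 := A.sub_grad k
    have hy : A.y k - A.ρ k • A.c (A.xs k) = A.yhat k - A.dys k := by
      unfold LCL.yhat; abel
    rw [← h0, hy, map_sub]
    abel
  have hdiff2 : Tendsto (fun k => Jt (A.J (A.xs k)) (A.dys k) -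
      Jt (A.J (A.x k)) (A.dys k)) atTop (𝓝 0) := by
    apply squeeze_zero_norm' (a := fun k => ‖Jt (A.J (A.xs k)) - Jt (A.J (A.x k))‖ * D)
    · apply Eventually.of_forall
      intro k
      have h1 : Jt (A.J (A.xs k)) (A.dys k) - Jt (A.J (A.x k)) (A.dys k) =
          (Jt (A.J (A.xs k)) - Jt (A.J (A.x k))) (A.dys k) := by simp
      rw [h1]
      refine le_trans ((Jt (A.J (A.xs k)) - Jt (A.J (A.x k))).le_opNorm _) ?_
      exact mul_le_mul_of_nonneg_left (hdysD k) (norm_nonneg _)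
    · have h1 : Tendsto (fun k => Jt (A.J (A.xs k)) - Jt (A.J (A.x k))) atTop
          (𝓝 (Jt (A.J xstar) - Jt (A.J xstar))) := hJtxs.sub hJtx
      rw [sub_self] at h1
      have := h1.norm.mul_const D
      simpa using this
  have hzs : Tendsto A.zs atTop (𝓝 (A.g xstar - Jt (A.J xstar) ystar)) := by
    have h1 : Tendsto (fun k => A.g (A.xs k) - Jt (A.J (A.xs k)) (A.yhat k) +
        (Jt (A.J (A.xs k)) (A.dys k) - Jt (A.J (A.x k)) (A.dys k))) atTop
        (𝓝 (A.g xstar - Jt (A.J xstar) ystar + 0)) :=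
      (hgxs.sub (tendsto_clm_apply hJtxs hyhat)).add hdiff2
    rw [add_zero] at h1
    exact h1.congr (fun k => (hid2 k).symm)
  -- ### convergence of y and z via the frozen-sequence lemma
  have hyconv : Tendsto A.y atTop (𝓝 ystar) := by
    apply frozen_tendsto A.y A.yhat Sc
      (fun k hk => (A.upd_succ k hk).2.1) (fun k hk => (A.upd_fail k hk).2.1) hSex ystar
    intro ε hε
    obtain ⟨N, hN⟩ := Metric.tendsto_atTop.mp hyhat ε hε
    exact ⟨N, fun k hk _ => hN k hk⟩
  have hzconv : Tendsto A.z atTop (𝓝 (A.g xstar - Jt (A.J xstar) ystar)) := by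
    apply frozen_tendsto A.z A.zs Sc
      (fun k hk => (A.upd_succ k hk).2.2.1) (fun k hk => (A.upd_fail k hk).2.2.1) hSex
    intro ε hε
    obtain ⟨N, hN⟩ := Metric.tendsto_atTop.mp hzs ε hε
    exact ⟨N, fun k hk _ => hN k hk⟩
  -- ### the sign conditions on zstar
  have hHzst : H (A.g xstar - Jt (A.J xstar) ystar) = 0 := by
    rw [map_sub]
    have h2 : H (Jt (A.J xstar) ystar) = Th xstar ystar := rfl
    rw [h2, hy0, sub_self]
  have hzstc : ∀ i : Fin n, 0 < xstar i → (A.g xstar - Jt (A.J xstar) ystar) i = 0 := by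
    intro i hi
    exact congrArg (fun v => v (⟨i, hi⟩ : {i : Fin n // 0 < xstar i})) hHzst
  have hzstnn : ∀ i, 0 ≤ (A.g xstar - Jt (A.J xstar) ystar) i := by
    intro i
    have hcomp : Tendsto (fun k => A.zs k i) atTop
        (𝓝 ((A.g xstar - Jt (A.J xstar) ystar) i)) :=
      ((EuclideanSpace.proj (𝕜 := ℝ) i).continuous.tendsto _).comp hzs
    have h1 : Tendsto (fun k => A.zs k i + A.ω k) atTop
        (𝓝 ((A.g xstar - Jt (A.J xstar) ystar) i + 0)) := hcomp.add hωto
    rw [add_zero] at h1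
    apply ge_of_tendsto' h1
    intro k
    have := hzlb k i
    linarith
  -- ### conclusion
  refine ⟨hxconv.prodMk_nhds (hyconv.prodMk_nhds hzconv), hcx, rfl, ?_⟩
  ext i
  show min (xstar i) ((A.g xstar - Jt (A.J xstar) ystar) i) = 0
  rcases (hxsnn i).lt_or_eq with hpos | h0
  · rw [hzstc i hpos]
    exact min_eq_right hpos.le
  · rw [← h0]
    exact min_eq_left (hzstnn i)
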